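/- If M is a strongly generalized Eulerian graded A_n(K)-module and f ∈ R is a homogeneous polynomial, then the localization M_f is a strongly generalized Eulerian graded A_n(K)-module. -/

import Mathlib

open FreeAlgebra

inductive WeylGen (n : ℕ) : Type
  | x : Fin n → WeylGen n
  | d : Fin n → WeylGen n

inductive WeylRel (K : Type) [Field K] (n : ℕ) :
    FreeAlgebra K (WeylGen n) → FreeAlgebra K (WeylGen n) → Prop
  | xx (i j : Fin n) : WeylRel K n (ι K (WeylGen.x i) * ι K (WeylGen.x j))
      (ι K (WeylGen.x j) * ι K (WeylGen.x i))
  | dd (i j : Fin n) : WeylRel K n (ι K (WeylGen.d i) * ι K (WeylGen.d j))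
      (ι K (WeylGen.d j) * ι K (WeylGen.d i))
  | dx_ne (i j : Fin n) (h : i ≠ j) : WeylRel K n (ι K (WeylGen.d i) * ι K (WeylGen.x j))
      (ι K (WeylGen.x j) * ι K (WeylGen.d i))
  | dx (i : Fin n) : WeylRel K n (ι K (WeylGen.d i) * ι K (WeylGen.x i))
      (1 + ι K (WeylGen.x i) * ι K (WeylGen.d i))

/-- The `n`-th Weyl algebra `A_n(K)`. -/
abbrev WeylAlgebra (K : Type) [Field K] (n : ℕ) := RingQuot (WeylRel K n)

variable (K : Type) [Field K] (n : ℕ)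

/-- The generator `X i`. -/
noncomputable def Wx (i : Fin n) : WeylAlgebra K n :=
  RingQuot.mkAlgHom K (WeylRel K n) (ι K (WeylGen.x i))

/-- The generator `∂ i`. -/
noncomputable def Wd (i : Fin n) : WeylAlgebra K n :=
  RingQuot.mkAlgHom K (WeylRel K n) (ι K (WeylGen.d i))

/-- The Euler operator `E_n = ∑ X_i ∂_i`. -/
noncomputable def euler : WeylAlgebra K n := ∑ i : Fin n, Wx K n i * Wd K n i

/-- The monomial `X^γ ∂^α`. -/
noncomputable def Wmonomial (γ α : Fin n → ℕ) : WeylAlgebra K n :=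
  (List.ofFn fun i => Wx K n i ^ γ i).prod * (List.ofFn fun i => Wd K n i ^ α i).prod

section AuxLemmas

variable {K n}

lemma wrel {p q : FreeAlgebra K (WeylGen n)} (h : WeylRel K n p q) :
    RingQuot.mkAlgHom K (WeylRel K n) p = RingQuot.mkAlgHom K (WeylRel K n) q :=
  RingQuot.mkAlgHom_rel K h

lemma wx_comm (i j : Fin n) : Wx K n i * Wx K n j = Wx K n j * Wx K n i := by
  unfold Wx; rw [← map_mul, ← map_mul]; exact wrel (WeylRel.xx i j)

lemma wd_comm (i j : Fin n) : Wd K n i * Wd K n j = Wd K n j * Wd K n i := by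
  unfold Wd; rw [← map_mul, ← map_mul]; exact wrel (WeylRel.dd i j)

lemma wd_wx_ne {i j : Fin n} (h : i ≠ j) : Wd K n i * Wx K n j = Wx K n j * Wd K n i := by
  unfold Wd Wx; rw [← map_mul, ← map_mul]; exact wrel (WeylRel.dx_ne i j h)

lemma wd_wx (i : Fin n) : Wd K n i * Wx K n i = 1 + Wx K n i * Wd K n i := by
  unfold Wd Wx
  rw [← map_mul]
  rw [wrel (WeylRel.dx i)]
  simp [map_add, map_mul, map_one]

lemma euler_mul_wx (i : Fin n) : euler K n * Wx K n i = Wx K n i * (euler K n + 1) := by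
  unfold euler
  rw [Finset.sum_mul]
  have key : ∀ l : Fin n, Wx K n l * Wd K n l * Wx K n i
      = Wx K n i * (Wx K n l * Wd K n l) + (if l = i then Wx K n i else 0) := by
    intro l
    by_cases h : l = i
    · subst h
      simp only [if_pos rfl]
      rw [mul_assoc, wd_wx l, mul_add, mul_one]
      simp only [if_true]
      abel
    · simp only [if_neg h]
      rw [mul_assoc, wd_wx_ne h, ← mul_assoc, wx_comm l i, mul_assoc, add_zero]
  calc ∑ l, Wx K n l * Wd K n l * Wx K n i
      = ∑ l, (Wx K n i * (Wx K n l * Wd K n l) + (if l = i then Wx K n i else 0)) := by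
        exact Finset.sum_congr rfl fun l _ => key l
    _ = Wx K n i * (euler K n + 1) := by
        rw [Finset.sum_add_distrib, ← Finset.mul_sum, Finset.sum_ite_eq' Finset.univ i]
        simp [euler, mul_add]

lemma euler_mul_wd (i : Fin n) : euler K n * Wd K n i = Wd K n i * (euler K n - 1) := by
  unfold euler
  rw [Finset.sum_mul]
  have key : ∀ l : Fin n, Wx K n l * Wd K n l * Wd K n i
      = Wd K n i * (Wx K n l * Wd K n l) - (if l = i then Wd K n i else 0) := by
    intro l
    by_cases h : l = i
    · subst h
      simp only [if_pos rfl]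
      have h1 : Wx K n l * Wd K n l = Wd K n l * Wx K n l - 1 := by
        rw [wd_wx l]; noncomm_ring
      rw [h1]
      simp only [if_true]
      have h2 : Wd K n l * Wx K n l * Wd K n l = Wd K n l * (Wx K n l * Wd K n l) := by
        rw [mul_assoc]
      rw [sub_mul, h2, h1]
      noncomm_ring
    · simp only [if_neg h]
      rw [mul_assoc, wd_comm l i, ← mul_assoc, ← wd_wx_ne (Ne.symm h), mul_assoc, sub_zero]
  calc ∑ l, Wx K n l * Wd K n l * Wd K n i
      = ∑ l, (Wd K n i * (Wx K n l * Wd K n l) - (if l = i then Wd K n i else 0)) := by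
        exact Finset.sum_congr rfl fun l _ => key l
    _ = Wd K n i * (euler K n - 1) := by
        rw [Finset.sum_sub_distrib, ← Finset.mul_sum, Finset.sum_ite_eq' Finset.univ i]
        simp [euler, mul_sub]

/-- `q * p = p * q'` propagates to powers of `q`. -/
lemma wconj_pow {W : Type} [Ring W] {p q q' : W} (h : q * p = p * q') (a : ℕ) :
    q ^ a * p = p * q' ^ a := by
  induction a with
  | zero => simp
  | succ a ih => rw [pow_succ, pow_succ, mul_assoc, h, ← mul_assoc, ih, mul_assoc]

/-- `Ecomm p d` : `euler * p = p * (euler + d)`. -/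
def Ecomm (p : WeylAlgebra K n) (d : ℤ) : Prop :=
  euler K n * p = p * (euler K n + (d : WeylAlgebra K n))

lemma Ecomm.one : Ecomm (1 : WeylAlgebra K n) 0 := by simp [Ecomm]

lemma Ecomm.wx (i : Fin n) : Ecomm (Wx K n i) 1 := by
  simpa [Ecomm] using euler_mul_wx i

lemma Ecomm.wd (i : Fin n) : Ecomm (Wd K n i) (-1) := by
  simpa [Ecomm, sub_eq_add_neg] using euler_mul_wd i

lemma Ecomm.mul {p q : WeylAlgebra K n} {d e : ℤ} (hp : Ecomm p d) (hq : Ecomm q e) :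
    Ecomm (p * q) (d + e) := by
  unfold Ecomm at *
  rw [← mul_assoc, hp, mul_assoc, add_mul, hq, Int.cast_comm d q]
  push_cast
  noncomm_ring

lemma Ecomm.pow {p : WeylAlgebra K n} {d : ℤ} (hp : Ecomm p d) (k : ℕ) :
    Ecomm (p ^ k) (k * d) := by
  induction k with
  | zero => simpa using Ecomm.one
  | succ k ih =>
      rw [pow_succ, show ((k + 1 : ℕ) : ℤ) * d = (k : ℤ) * d + d by push_cast; ring]
      exact ih.mul hp

lemma Ecomm.smul {p : WeylAlgebra K n} {d : ℤ} (c : K) (hp : Ecomm p d) : Ecomm (c • p) d := by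
  unfold Ecomm at *
  rw [mul_smul_comm, hp, smul_mul_assoc]

lemma Ecomm.sum {α : Type*} {s : Finset α} {F : α → WeylAlgebra K n} {d : ℤ}
    (h : ∀ γ ∈ s, Ecomm (F γ) d) : Ecomm (∑ γ ∈ s, F γ) d := by
  unfold Ecomm at *
  rw [Finset.mul_sum, Finset.sum_mul]
  exact Finset.sum_congr rfl h

lemma Ecomm.listProd (L : List (Fin n)) (g : Fin n → WeylAlgebra K n) (d : Fin n → ℤ)
    (h : ∀ i, Ecomm (g i) (d i)) :
    Ecomm ((L.map g).prod) ((L.map d).sum) := by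
  induction L with
  | nil => simpa using Ecomm.one
  | cons i L ih => simpa using (h i).mul ih

section ModuleLemmas

variable {Mf : Type} [AddCommGroup Mf] [Module (WeylAlgebra K n) Mf]

lemma Ecomm.step {p : WeylAlgebra K n} {d : ℤ} (hp : Ecomm p d) (c : ℤ) :
    (euler K n - ((c + d : ℤ) : WeylAlgebra K n)) * p
      = p * (euler K n - (c : WeylAlgebra K n)) := by
  rw [sub_mul, hp, Int.cast_comm]
  push_cast
  rw [mul_add, mul_add, mul_sub]
  abel

/-- transport of `(euler - c)^a`-torsion through an `Ecomm` element. -/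
lemma Ecomm.transport {p : WeylAlgebra K n} {d : ℤ} (hp : Ecomm p d) {c : ℤ} {a : ℕ}
    {y : Mf} (h : (euler K n - (c : WeylAlgebra K n)) ^ a • y = 0) :
    (euler K n - ((c + d : ℤ) : WeylAlgebra K n)) ^ a • (p • y) = 0 := by
  rw [← mul_smul, wconj_pow (hp.step c) a, mul_smul, h, smul_zero]

lemma int_smul_cancel [CharZero K] {N : ℤ} (hN : N ≠ 0) {y : Mf}
    (h : ((N : ℤ) : WeylAlgebra K n) • y = 0) : y = 0 := by
  have hNK : ((N : K)) ≠ 0 := Int.cast_ne_zero.mpr hN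
  have key : ((N : ℤ) : WeylAlgebra K n) = algebraMap K (WeylAlgebra K n) (N : K) := by
    rw [map_intCast]
  have : (algebraMap K (WeylAlgebra K n) ((N : K)⁻¹)
      * algebraMap K (WeylAlgebra K n) (N : K)) • y = 0 := by
    rw [mul_smul, ← key, h, smul_zero]
  rwa [← map_mul, inv_mul_cancel₀ hNK, map_one, one_smul] at this

lemma lowest_scalar {u : Mf} (h : euler K n • u = 0) (c : ℤ) (a : ℕ) :
    (euler K n - (c : WeylAlgebra K n)) ^ a • u
      = (((-c) ^ a : ℤ) : WeylAlgebra K n) • u := by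
  induction a with
  | zero => simp
  | succ a ih =>
      rw [pow_succ', mul_smul, ih, ← mul_smul,
        ((Int.cast_commute ((-c) ^ a) (euler K n - (c : WeylAlgebra K n))).symm).eq,
        mul_smul, sub_smul, h, zero_sub, smul_neg, ← mul_smul, ← Int.cast_mul]
      rw [show ((-c) ^ a * c : ℤ) = -((-c) ^ (a + 1)) by ring]
      rw [Int.cast_neg, neg_smul, neg_neg]

end ModuleLemmas

section ModuleLemmas2

variable {Mf : Type} [AddCommGroup Mf] [Module (WeylAlgebra K n) Mf]

open Polynomial in
lemma two_kills [CharZero K] {b b' : ℤ} (hbb : b ≠ b') {a a' : ℕ} {y : Mf}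
    (h1 : (euler K n - (b : WeylAlgebra K n)) ^ a • y = 0)
    (h2 : (euler K n - (b' : WeylAlgebra K n)) ^ a' • y = 0) : y = 0 := by
  have hK : (b : K) ≠ (b' : K) := by exact_mod_cast hbb
  have hc : IsCoprime ((X - C (b : K)) ^ a) ((X - C (b' : K)) ^ a') :=
    (isCoprime_X_sub_C_of_isUnit_sub ((sub_ne_zero_of_ne hK).isUnit)).pow
  obtain ⟨u, v, huv⟩ := hc
  have hcast : ∀ m : ℤ, algebraMap K (WeylAlgebra K n) ((m : ℤ) : K)
      = ((m : ℤ) : WeylAlgebra K n) := by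
    intro m; rw [map_intCast]
  have := congrArg (fun p => Polynomial.aeval (euler K n) p • y) huv
  simp only [map_add, map_mul, map_pow, map_sub, aeval_X, aeval_C, add_smul, mul_smul,
    map_one, one_smul] at this
  rw [hcast b, hcast b', h1, h2] at this
  simpa using this.symm

lemma wx_pow_kill {w : Mf} {l : Fin n} (h : Wx K n l • w = 0) {m : ℕ} (hm : m ≠ 0) :
    (Wx K n l ^ m) • w = 0 := by
  obtain ⟨m, rfl⟩ := Nat.exists_eq_succ_of_ne_zero hm
  rw [pow_succ, mul_smul, h, smul_zero]

lemma listprod_kill {w : Mf} (γ : Fin n → ℕ) (hw : ∀ l, Wx K n l • w = 0) :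
    ∀ L : List (Fin n),
      (((L.map fun i => Wx K n i ^ γ i).prod) • w = w ∧ ∀ i ∈ L, γ i = 0) ∨
      ((L.map fun i => Wx K n i ^ γ i).prod) • w = 0 := by
  intro L
  induction L with
  | nil => left; simp
  | cons i L ih =>
      rcases ih with ⟨hprod, hz⟩ | hzero
      · by_cases hγ : γ i = 0
        · left
          constructor
          · simp only [List.map_cons, List.prod_cons, mul_smul, hprod, hγ, pow_zero, one_smul]
          · intro i' hi'
            rcases List.mem_cons.mp hi' with rfl | hi'
            · exact hγ
            · exact hz i' hi'
        · right
          simp only [List.map_cons, List.prod_cons, mul_smul, hprod]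
          exact wx_pow_kill (hw i) hγ
      · right
        simp only [List.map_cons, List.prod_cons, mul_smul, hzero, smul_zero]

end ModuleLemmas2

section Align

variable {M Mf : Type} [AddCommGroup M] [AddCommGroup Mf]
  [Module (WeylAlgebra K n) M] [Module (WeylAlgebra K n) Mf]

set_option synthInstance.maxHeartbeats 1000000 in
set_option maxHeartbeats 1000000 in
lemma align (gM : ℤ → AddSubgroup M) (gMf : ℤ → AddSubgroup Mf)
    (hMi : DirectSum.IsInternal gM) (hMfi : DirectSum.IsInternal gMf)
    (ι : M →ₗ[WeylAlgebra K n] Mf) (hιgr : ∀ j : ℤ, ∀ m ∈ gM j, ι m ∈ gMf j)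
    (a : ℕ) (hsge : ∀ j : ℤ, ∀ m ∈ gM j, (euler K n - (j : WeylAlgebra K n)) ^ a • m = 0)
    (t : ℤ) (v : Mf) (hv : v ∈ gMf t) (z : M) (hz : ι z = v) :
    (euler K n - (t : WeylAlgebra K n)) ^ a • v = 0 := by
  classical
  set φ : ∀ s : ℤ, gM s →+ gMf s := (fun s =>
    AddMonoidHom.mk' (fun m => ⟨ι m, hιgr s m m.2⟩)
      (fun m m' => by ext; simp)) with hφdef
  have hφval : ∀ (s : ℤ) (m : gM s), ((φ s m : gMf s) : Mf) = ι m := fun s m => rfl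
  set ψ : DirectSum ℤ (fun s => ↥(gM s)) →+ DirectSum ℤ (fun s => ↥(gMf s)) :=
    DirectSum.toAddMonoid (fun s => (DirectSum.of (fun i => (gMf i : AddSubgroup Mf)) s).comp (φ s)) with hψ
  have hgen : ∀ (s : ℤ) (x : gM s),
      ψ (DirectSum.of (fun i => (gM i : AddSubgroup M)) s x)
        = DirectSum.of _ s (φ s x) := by
    intro s x
    rw [hψ, DirectSum.toAddMonoid_of, AddMonoidHom.comp_apply]
  obtain ⟨d, hd⟩ := hMi.2 z
  have hkey : (DirectSum.coeAddMonoidHom gMf).comp ψ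
      = ι.toAddMonoidHom.comp (DirectSum.coeAddMonoidHom gM) := by
    refine DirectSum.addHom_ext fun s x => ?_
    rw [AddMonoidHom.comp_apply, AddMonoidHom.comp_apply, hgen,
      DirectSum.coeAddMonoidHom_of, DirectSum.coeAddMonoidHom_of]
    exact (hφval s x).symm ▸ rfl
  have h2 := DFunLike.congr_fun hkey d
  rw [AddMonoidHom.comp_apply, AddMonoidHom.comp_apply] at h2
  have hψd : DirectSum.coeAddMonoidHom gMf (ψ d) = v := by
    rw [h2]
    simp only [LinearMap.toAddMonoidHom_coe, hd, hz]
  have heq : ψ d = DirectSum.of (fun s => (gMf s : AddSubgroup Mf)) t ⟨v, hv⟩ := by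
    apply hMfi.1
    rw [hψd, DirectSum.coeAddMonoidHom_of]
  have hcomp : (ψ d) t = (⟨v, hv⟩ : gMf t) := by rw [heq, DirectSum.of_eq_same]
  have h4 : ∀ dd : DirectSum ℤ (fun s => ↥(gM s)), (ψ dd) t = φ t (dd t) := by
    intro dd
    induction dd using DirectSum.induction_on with
    | zero => simp
    | of s x =>
        rw [hgen]
        by_cases hst : s = t
        · subst hst; rw [DirectSum.of_eq_same, DirectSum.of_eq_same]
        · rw [DirectSum.of_eq_of_ne _ _ _ (Ne.symm hst), DirectSum.of_eq_of_ne _ _ _ (Ne.symm hst), map_zero]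
    | add x y hx hy =>
        rw [map_add, DFinsupp.add_apply, DFinsupp.add_apply, map_add, hx, hy]
  have h5 : φ t (d t) = (⟨v, hv⟩ : gMf t) := by rw [← h4 d, hcomp]
  have hval : ι (d t) = v := by
    rw [← hφval t (d t)]
    exact congrArg Subtype.val h5
  rw [← hval, ← map_smul, hsge t (d t) (d t).2, map_zero]

end Align

end AuxLemmas

/-- `g` is a grading making `M` a graded module over the graded Weyl algebra
(`deg X_i = 1`, `deg ∂_i = -1`): `M` is the internal direct sum of the subgroups `g j` and
the generators act with degrees `1` and `-1`. -/
def IsGradedWeylModule (M : Type) [AddCommGroup M] [Module (WeylAlgebra K n) M]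
    (g : ℤ → AddSubgroup M) : Prop :=
  DirectSum.IsInternal g ∧
    (∀ (i : Fin n) (j : ℤ), ∀ m ∈ g j, Wx K n i • m ∈ g (j + 1)) ∧
    (∀ (i : Fin n) (j : ℤ), ∀ m ∈ g j, Wd K n i • m ∈ g (j - 1))

/-- A graded `A_n(K)`-module is strongly generalized Eulerian if there is a single `a > 0`
such that `(E_n - |w|)^a • w = 0` for every homogeneous `w`. -/
def IsStronglyGeneralizedEulerian (M : Type) [AddCommGroup M] [Module (WeylAlgebra K n) M]
    (g : ℤ → AddSubgroup M) : Prop :=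
  ∃ a : ℕ, 0 < a ∧ ∀ (j : ℤ), ∀ m ∈ g j,
    ((euler K n - (j : WeylAlgebra K n)) ^ a) • m = 0

/-- A graded `A_n(K)`-module is generalized Eulerian if for every homogeneous `w` there is
some `a > 0` (depending on `w`) with `(E_n - |w|)^a • w = 0`. -/
def IsGeneralizedEulerian (M : Type) [AddCommGroup M] [Module (WeylAlgebra K n) M]
    (g : ℤ → AddSubgroup M) : Prop :=
  ∀ (j : ℤ), ∀ m ∈ g j, ∃ a : ℕ, 0 < a ∧
    ((euler K n - (j : WeylAlgebra K n)) ^ a) • m = 0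

/-- If `M` is a strongly generalized Eulerian graded `A_n(K)`-module and
`f = ∑_γ c_γ X^γ ∈ R = K[X_1,…,X_n]` is a homogeneous polynomial (of degree `df`), then the
localization `M_f` — the graded `A_n(K)`-module `Mf` equipped with a degree-preserving
`A_n(K)`-linear map `ι : M → Mf`, on which `f` acts bijectively and whose every homogeneous
element is of the form `(ι z)/f^k` for some homogeneous `z ∈ M` — is strongly generalized
Eulerian. -/
theorem localization_sge [CharZero K]
    (M Mf : Type) [AddCommGroup M] [AddCommGroup Mf]
    [Module (WeylAlgebra K n) M] [Module (WeylAlgebra K n) Mf]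
    (gM : ℤ → AddSubgroup M) (gMf : ℤ → AddSubgroup Mf)
    (hM : IsGradedWeylModule K n M gM) (hMf : IsGradedWeylModule K n Mf gMf)
    (S : Finset (Fin n → ℕ)) (c : (Fin n → ℕ) → K) (df : ℕ)
    (hhom : ∀ γ ∈ S, ∑ i : Fin n, γ i = df)
    (f : WeylAlgebra K n) (hf : f = ∑ γ ∈ S, c γ • Wmonomial K n γ (fun _ => 0))
    (ι : M →ₗ[WeylAlgebra K n] Mf) (hιgr : ∀ (j : ℤ), ∀ m ∈ gM j, ι m ∈ gMf j)
    (hfbij : Function.Bijective fun y : Mf => f • y)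
    (hloc : ∀ (j : ℤ), ∀ y ∈ gMf j, ∃ (k : ℕ) (i : ℤ) (z : M),
      z ∈ gM i ∧ f ^ k • y = ι z)
    (hsge : IsStronglyGeneralizedEulerian K n M gM) :
    IsStronglyGeneralizedEulerian K n Mf gMf := by
  classical
  obtain ⟨a, ha, hsge'⟩ := hsge
  refine ⟨a, ha, ?_⟩
  intro j y hy
  by_cases hy0 : y = 0
  · rw [hy0, smul_zero]
  -- injectivity of the action of `f ^ k`
  have hinj : ∀ k : ℕ, Function.Injective (fun w : Mf => f ^ k • w) := by
    intro k
    induction k with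
    | zero => intro w w' h; simpa using h
    | succ k ih =>
        intro w w' h
        apply hfbij.1
        apply ih
        show f ^ k • (f • w) = f ^ k • (f • w')
        simpa only [pow_succ, mul_smul] using h
  by_cases hdf : df = 0
  · -- degree 0 case : f is a scalar
    subst hdf
    have hmon : ∀ γ ∈ S, Wmonomial K n γ (fun _ => 0) = 1 := by
      intro γ hγ
      have h0 : ∀ i : Fin n, γ i = 0 := by
        have := hhom γ hγ
        intro i
        exact (Finset.sum_eq_zero_iff.mp this) i (Finset.mem_univ i)
      unfold Wmonomial
      have h1 : (List.ofFn fun i => Wx K n i ^ γ i) = List.ofFn fun _ : Fin n => (1 : WeylAlgebra K n) := by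
        congr 1; funext i; rw [h0 i, pow_zero]
      have h2 : (List.ofFn fun i => Wd K n i ^ (0 : ℕ)) = List.ofFn fun _ : Fin n => (1 : WeylAlgebra K n) := by
        congr 1
        funext i
        exact pow_zero _
      rw [h1, h2, List.ofFn_const, List.prod_replicate, one_pow, one_mul]
    have hf2 : f = (∑ γ ∈ S, c γ) • (1 : WeylAlgebra K n) := by
      rw [hf, Finset.sum_smul]
      exact Finset.sum_congr rfl fun γ hγ => by rw [hmon γ hγ]
    set c0 : K := ∑ γ ∈ S, c γ with hc0
    by_cases hc : c0 = 0
    · have : y = 0 := by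
        apply hfbij.1
        show f • y = f • 0
        rw [hf2, hc, zero_smul, zero_smul, smul_zero]
      exact absurd this hy0
    · obtain ⟨k, i, z, hz, heq⟩ := hloc j y hy
      have hfk : f ^ k = algebraMap K (WeylAlgebra K n) (c0 ^ k) := by
        rw [hf2, smul_pow, one_pow, Algebra.smul_def, mul_one]
      have hy2 : y = ι (algebraMap K (WeylAlgebra K n) ((c0⁻¹) ^ k) • z) := by
        rw [map_smul]
        rw [← heq, hfk, ← mul_smul, ← map_mul]
        rw [show (c0⁻¹) ^ k * c0 ^ k = 1 by
          rw [← mul_pow, inv_mul_cancel₀ hc, one_pow]]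
        rw [map_one, one_smul]
      exact align gM gMf hM.1 hMf.1 ι hιgr a hsge' j y hy _ hy2.symm
  · -- positive degree case
    have hEf : Ecomm f (df : ℤ) := by
      rw [hf]
      apply Ecomm.sum
      intro γ hγ
      apply Ecomm.smul
      unfold Wmonomial
      have h2 : (List.ofFn fun i => Wd K n i ^ (0 : ℕ)).prod = 1 := by
        simp only [pow_zero, List.ofFn_const, List.prod_replicate, one_pow]
      rw [h2, mul_one]
      have h3 := Ecomm.listProd (List.finRange n) (fun i => Wx K n i ^ γ i)
        (fun i => (γ i : ℤ)) (fun i => by simpa using (Ecomm.wx i).pow (γ i))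
      rw [← List.ofFn_eq_map, ← List.ofFn_eq_map] at h3
      have h4 : (List.ofFn fun i => ((γ i : ℤ))).sum = (df : ℤ) := by
        rw [List.ofFn_eq_map, ← Fin.sum_univ_def]
        rw [← Nat.cast_sum, hhom γ hγ]
      rwa [h4] at h3
    -- killing lemma for f
    have hfkill : ∀ w : Mf, (∀ l : Fin n, Wx K n l • w = 0) → f • w = 0 := by
      intro w hw
      rw [hf, Finset.sum_smul]
      refine Finset.sum_eq_zero fun γ hγ => ?_
      have hz : Wmonomial K n γ (fun _ => 0) • w = 0 := by
        unfold Wmonomial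
        have h2 : (List.ofFn fun i => Wd K n i ^ (0 : ℕ)).prod = 1 := by
          simp only [pow_zero, List.ofFn_const, List.prod_replicate, one_pow]
        rw [h2, mul_one, List.ofFn_eq_map]
        rcases listprod_kill γ hw (List.finRange n) with ⟨_, hall⟩ | h0
        · exfalso
          apply hdf
          rw [← hhom γ hγ]
          exact Finset.sum_eq_zero fun i _ => hall i (List.mem_finRange i)
        · exact h0
      rw [Algebra.smul_def, mul_smul, hz, smul_zero]
    -- existence of some eigen-index for every homogeneous element
    have hF1 : ∀ (t : ℤ) (w : Mf), w ∈ gMf t →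
        ∃ b : ℤ, (euler K n - (b : WeylAlgebra K n)) ^ a • w = 0 := by
      intro t w hw
      obtain ⟨k, i, z, hz, heq⟩ := hloc t w hw
      refine ⟨i - k * df, ?_⟩
      have hPi : (euler K n - (i : WeylAlgebra K n)) ^ a • (f ^ k • w) = 0 := by
        rw [heq, ← map_smul, hsge' i z hz, map_zero]
      have hstep : (euler K n - ((i : ℤ) : WeylAlgebra K n)) * f ^ k
          = f ^ k * (euler K n - ((i - k * df : ℤ) : WeylAlgebra K n)) := by
        have h5 := (hEf.pow k).step (i - k * df)
        rw [show (i - k * df + k * df : ℤ) = i by ring] at h5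
        exact h5
      have h2 : f ^ k • ((euler K n - ((i - k * df : ℤ) : WeylAlgebra K n)) ^ a • w) = 0 := by
        rw [← mul_smul, ← wconj_pow hstep a, mul_smul]
        exact hPi
      apply hinj k
      show f ^ k • _ = f ^ k • 0
      rw [smul_zero]
      exact h2
    -- commuting of the operators P c
    have hcomm : ∀ (b b' : ℤ) (x : Mf),
        (euler K n - (b : WeylAlgebra K n)) ^ a • (euler K n - (b' : WeylAlgebra K n)) ^ a • x
        = (euler K n - (b' : WeylAlgebra K n)) ^ a • (euler K n - (b : WeylAlgebra K n)) ^ a • x := by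
      intro b b' x
      have h1 : Commute (euler K n - (b : WeylAlgebra K n)) (euler K n - (b' : WeylAlgebra K n)) := by
        apply Commute.sub_left
        · apply Commute.sub_right
          · exact Commute.refl _
          · exact (Int.cast_commute b' (euler K n)).symm
        · apply Commute.sub_right
          · exact Int.cast_commute b (euler K n)
          · exact Int.cast_commute b _
      rw [← mul_smul, ← mul_smul, (h1.pow_pow a a).eq]
    -- uniqueness of the eigen-index for nonzero elements of a fixed degree
    have hUNIQ : ∀ (t b b' : ℤ) (v w : Mf), v ∈ gMf t → w ∈ gMf t → v ≠ 0 → w ≠ 0 →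
        (euler K n - (b : WeylAlgebra K n)) ^ a • v = 0 →
        (euler K n - (b' : WeylAlgebra K n)) ^ a • w = 0 → b = b' := by
      intro t b b' v w hv hw hv0 hw0 hPv hPw
      by_contra hcc
      by_cases hvw : v + w = 0
      · have hwv : w = -v := eq_neg_of_add_eq_zero_right hvw
        have hPbw : (euler K n - (b : WeylAlgebra K n)) ^ a • w = 0 := by
          rw [hwv, smul_neg, hPv, neg_zero]
        exact hw0 (two_kills hcc hPbw hPw)
      · obtain ⟨b'', hb''⟩ := hF1 t (v + w) (add_mem hv hw)
        by_cases hbc : b'' = b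
        · subst hbc
          rw [smul_add, hPv, zero_add] at hb''
          exact hw0 (two_kills hcc hb'' hPw)
        · have h1 : (euler K n - (b'' : WeylAlgebra K n)) ^ a • v
              = -((euler K n - (b'' : WeylAlgebra K n)) ^ a • w) := by
            rw [smul_add] at hb''
            exact eq_neg_of_add_eq_zero_left hb''
          have h2 : (euler K n - (b : WeylAlgebra K n)) ^ a
              • ((euler K n - (b'' : WeylAlgebra K n)) ^ a • v) = 0 := by
            rw [hcomm, hPv, smul_zero]
          have h3 : (euler K n - (b' : WeylAlgebra K n)) ^ a
              • ((euler K n - (b'' : WeylAlgebra K n)) ^ a • v) = 0 := by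
            rw [h1, smul_neg, hcomm, hPw, smul_zero, neg_zero]
          have h4 : (euler K n - (b'' : WeylAlgebra K n)) ^ a • v = 0 := two_kills hcc h2 h3
          exact hv0 (two_kills hbc h4 hPv)
    -- climbing with X-variables
    have hCLIMB : ∀ (s : ℕ) (t b : ℤ) (w : Mf), w ∈ gMf t → w ≠ 0 →
        (euler K n - (b : WeylAlgebra K n)) ^ a • w = 0 →
        ∃ w', w' ∈ gMf (t + s) ∧ w' ≠ 0 ∧
          (euler K n - ((b + s : ℤ) : WeylAlgebra K n)) ^ a • w' = 0 := by
      intro s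
      induction s with
      | zero =>
          intro t b w hw hw0 hPw
          refine ⟨w, by simpa using hw, hw0, by simpa using hPw⟩
      | succ s ih =>
          intro t b w hw hw0 hPw
          obtain ⟨w', hw', hw'0, hPw'⟩ := ih t b w hw hw0 hPw
          have hsurv : ∃ l : Fin n, Wx K n l • w' ≠ 0 := by
            by_contra hall
            push_neg at hall
            exact hw'0 (hfbij.1 (show f • w' = f • 0 by rw [smul_zero, hfkill w' hall]))
          obtain ⟨l, hl⟩ := hsurv
          refine ⟨Wx K n l • w', ?_, hl, ?_⟩
          · have := hMf.2.1 l (t + s) w' hw'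
            rwa [show ((t + s : ℤ) + 1 : ℤ) = (t + (s + 1 : ℕ) : ℤ) by push_cast; ring] at this
          · have := (Ecomm.wx (K := K) (n := n) l).transport (c := b + s) (a := a) hPw'
            rwa [show ((b + s : ℤ) + 1 : ℤ) = (b + (s + 1 : ℕ) : ℤ) by push_cast; ring] at this
    -- descending with D-variables
    have hDOWN : ∀ (m : ℕ) (i : ℤ) (u : Mf), u ∈ gMf i → u ≠ 0 →
        (euler K n - (i : WeylAlgebra K n)) ^ a • u = 0 → i = j + m →
        (∃ v, v ∈ gMf j ∧ v ≠ 0 ∧ (euler K n - (j : WeylAlgebra K n)) ^ a • v = 0) ∨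
        (j ≤ 0 ∧ ∃ v, v ∈ gMf 0 ∧ v ≠ 0 ∧ (euler K n - ((0 : ℤ) : WeylAlgebra K n)) ^ a • v = 0) := by
      intro m
      induction m with
      | zero =>
          intro i u hu hu0 hPu hi
          left
          exact ⟨u, by rwa [show i = j by omega] at hu, hu0, by rwa [show i = j by omega] at hPu⟩
      | succ m ih =>
          intro i u hu hu0 hPu hi
          by_cases hD : ∃ l : Fin n, Wd K n l • u ≠ 0
          · obtain ⟨l, hl⟩ := hD
            apply ih (i - 1) (Wd K n l • u) (hMf.2.2 l i u hu) hl
            · have := (Ecomm.wd (K := K) (n := n) l).transport (c := i) (a := a) hPu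
              rwa [show (i + -1 : ℤ) = (i - 1 : ℤ) by ring] at this
            · omega
          · push_neg at hD
            have he : euler K n • u = 0 := by
              show (∑ l : Fin n, Wx K n l * Wd K n l) • u = 0
              rw [Finset.sum_smul]
              exact Finset.sum_eq_zero fun l _ => by rw [mul_smul, hD l, smul_zero]
            have hsc := lowest_scalar (Mf := Mf) he i a
            rw [hPu] at hsc
            have hi0 : i = 0 := by
              by_contra hi0
              apply hu0
              exact int_smul_cancel (pow_ne_zero a (show (-i : ℤ) ≠ 0 by omega)) hsc.symm
            right
            refine ⟨by omega, u, by rwa [hi0] at hu, hu0, ?_⟩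
            rw [← hi0]
            exact hPu
    -- endgame
    obtain ⟨b, hb⟩ := hF1 j y hy
    suffices hbj : b = j by rw [← hbj]; exact hb
    obtain ⟨k, i, z, hz, heq⟩ := hloc j y hy
    have hu0 : ι z ≠ 0 := by
      intro h0
      apply hy0
      apply hinj k
      show f ^ k • y = f ^ k • 0
      rw [smul_zero, heq, h0]
    have hui : ι z ∈ gMf i := hιgr i z hz
    have hPi : (euler K n - (i : WeylAlgebra K n)) ^ a • ι z = 0 := by
      rw [← map_smul, hsge' i z hz, map_zero]
    by_cases hij : j ≤ i
    · rcases hDOWN (i - j).toNat i (ι z) hui hu0 hPi (by omega) with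
        ⟨v, hv, hv0, hPv⟩ | ⟨hj0, v, hv, hv0, hPv⟩
      · exact hUNIQ j b j y v hy hv hy0 hv0 hb hPv
      · obtain ⟨y', hy', hy'0, hPy'⟩ := hCLIMB (-j).toNat j b y hy hy0 hb
        rw [show (j + ((-j).toNat : ℤ) : ℤ) = 0 by omega] at hy'
        have := hUNIQ 0 (b + (-j).toNat) 0 y' v hy' hv hy'0 hv0 hPy' hPv
        omega
    · obtain ⟨v, hv, hv0, hPv⟩ := hCLIMB (j - i).toNat i i (ι z) hui hu0 hPi
      rw [show (i + ((j - i).toNat : ℤ) : ℤ) = j by omega] at hv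
      have := hUNIQ j b (i + ((j - i).toNat : ℤ)) y v hy hv hy0 hv0 hb hPv
      omega
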